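/- Let p be a prime element of ℤ[ω] that does not divide 14, and suppose there is no t ∈ ℤ[ω] with p dividing t³ − 28 (i.e., 28 is not a cube modulo p). Then for all integers x and y with 7x³ + 2y³ ≠ 0, the multiplicity of p in 7x³ + 2y³ (viewed in ℤ[ω]) is divisible by 3; that is, if e is the largest natural number with p^e dividing 7x³ + 2y³ in ℤ[ω], then 3 divides e. -/

import Mathlib

open Polynomial

/-- The ring of Eisenstein integers ℤ[ω] = ℤ[X]/(X² + X + 1). -/
abbrev Eisenstein : Type := AdjoinRoot (X ^ 2 + X + 1 : ℤ[X])

/-- ω, a primitive cube root of unity, satisfying ω² + ω + 1 = 0. -/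
noncomputable def ω : Eisenstein := AdjoinRoot.root _

lemma eisPoly_monic : (X ^ 2 + X + 1 : ℤ[X]).Monic := by monicity!

lemma eisPoly_prime : Prime (X ^ 2 + X + 1 : ℤ[X]) := by
  have h3 : (Polynomial.cyclotomic 3 ℤ) = X ^ 2 + X + 1 := by
    simp [Polynomial.cyclotomic_prime, Finset.sum_range_succ]
    ring
  have h := Polynomial.cyclotomic.irreducible (n := 3) (by norm_num)
  rw [h3] at h
  exact h.prime

instance : IsDomain Eisenstein := by
  have : (Ideal.span {(X ^ 2 + X + 1 : ℤ[X])}).IsPrime :=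
    (Ideal.span_singleton_prime eisPoly_prime.ne_zero).mpr eisPoly_prime
  exact Ideal.Quotient.isDomain _

noncomputable instance : Module ℤ Eisenstein := inferInstance
instance : Module.Free ℤ Eisenstein := Module.Free.of_basis (AdjoinRoot.powerBasis' eisPoly_monic).basis
instance : Module.Finite ℤ Eisenstein := Module.Finite.of_basis (AdjoinRoot.powerBasis' eisPoly_monic).basis

lemma exists_inv {p : Eisenstein} (hp : Prime p) {y : Eisenstein} (hy : ¬ p ∣ y) :
    ∃ z : Eisenstein, p ∣ y * z - 1 := by
  set I : Ideal Eisenstein := Ideal.span {p} with hI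
  haveI : I.IsPrime := (Ideal.span_singleton_prime hp.ne_zero).mpr hp
  haveI : Finite (Eisenstein ⧸ I) :=
    Ideal.finiteQuotientOfFreeOfNeBot I (by
      simpa [hI, Ideal.span_singleton_eq_bot] using hp.ne_zero)
  have hfield : IsField (Eisenstein ⧸ I) := Finite.isField_of_domain _
  have hy' : Ideal.Quotient.mk I y ≠ 0 := by
    rw [Ne, Ideal.Quotient.eq_zero_iff_mem, hI, Ideal.mem_span_singleton]
    exact hy
  obtain ⟨b, hb⟩ := hfield.mul_inv_cancel hy'
  obtain ⟨z, rfl⟩ := Ideal.Quotient.mk_surjective b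
  refine ⟨z, ?_⟩
  have h0 : Ideal.Quotient.mk I (y * z - 1) = 0 := by
    rw [map_sub, map_mul, map_one, hb, sub_self]
  rw [Ideal.Quotient.eq_zero_iff_mem, hI, Ideal.mem_span_singleton] at h0
  exact h0

lemma exists_cube (p : Eisenstein) (hp : Prime p) (x y : Eisenstein)
    (hS : p ∣ 7 * x ^ 3 + 2 * y ^ 3) (hy : ¬ p ∣ y) :
    ∃ t : Eisenstein, p ∣ t ^ 3 - 28 := by
  obtain ⟨z, hz⟩ := exists_inv hp hy
  refine ⟨7 * x ^ 2 * z ^ 2, ?_⟩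
  have h1 : p ∣ (y * z) ^ 6 - 1 ^ 6 :=
    dvd_trans hz (sub_dvd_pow_sub_pow (y * z) 1 6)
  have h2 : p ∣ 7 * z ^ 6 * (7 * x ^ 3 - 2 * y ^ 3) * (7 * x ^ 3 + 2 * y ^ 3) :=
    Dvd.dvd.mul_left hS _
  have key : (7 * x ^ 2 * z ^ 2) ^ 3 - 28 =
      7 * z ^ 6 * (7 * x ^ 3 - 2 * y ^ 3) * (7 * x ^ 3 + 2 * y ^ 3)
        + 28 * ((y * z) ^ 6 - 1 ^ 6) := by ring
  rw [key]
  exact dvd_add h2 (Dvd.dvd.mul_left h1 _)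

lemma key_lemma (p : Eisenstein) (hp : Prime p)
    (h14 : ¬ p ∣ 14) (h28 : ¬ ∃ t : Eisenstein, p ∣ t ^ 3 - 28) :
    ∀ e : ℕ, ∀ x y : Eisenstein,
      p ^ e ∣ 7 * x ^ 3 + 2 * y ^ 3 →
      ¬ p ^ (e + 1) ∣ 7 * x ^ 3 + 2 * y ^ 3 → 3 ∣ e := by
  have h7 : ¬ p ∣ 7 := fun h => h14 (h.trans ⟨2, by norm_num⟩)
  intro e
  induction e using Nat.strong_induction_on with
  | _ e ih =>
    intro x y he he1
    rcases Nat.eq_zero_or_pos e with rfl | hepos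
    · exact dvd_zero 3
    have hpS : p ∣ 7 * x ^ 3 + 2 * y ^ 3 :=
      dvd_trans (dvd_pow_self p hepos.ne') he
    have hy : p ∣ y := by
      by_contra hy
      exact h28 (exists_cube p hp x y hpS hy)
    have hx : p ∣ x := by
      have h7x : p ∣ 7 * x ^ 3 := by
        have : p ∣ (7 * x ^ 3 + 2 * y ^ 3) - 2 * y ^ 3 :=
          dvd_sub hpS (Dvd.dvd.mul_left (hy.trans (dvd_pow_self y (by norm_num))) 2)
        simpa using this
      have := (hp.dvd_mul.mp h7x).resolve_left h7
      exact hp.dvd_of_dvd_pow this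
    obtain ⟨x1, rfl⟩ := hx
    obtain ⟨y1, rfl⟩ := hy
    have hfac : 7 * (p * x1) ^ 3 + 2 * (p * y1) ^ 3
        = p ^ 3 * (7 * x1 ^ 3 + 2 * y1 ^ 3) := by ring
    have he3 : 3 ≤ e := by
      by_contra h
      push_neg at h
      apply he1
      calc p ^ (e + 1) ∣ p ^ 3 := pow_dvd_pow p (by omega)
        _ ∣ _ := by rw [hfac]; exact Dvd.intro _ rfl
    have hcancel : p ^ (e - 3) ∣ 7 * x1 ^ 3 + 2 * y1 ^ 3 := by
      have hne : p ^ 3 ≠ 0 := pow_ne_zero _ hp.ne_zero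
      rw [hfac] at he
      have : p ^ 3 * p ^ (e - 3) ∣ p ^ 3 * (7 * x1 ^ 3 + 2 * y1 ^ 3) := by
        rw [← pow_add]
        rwa [show 3 + (e - 3) = e by omega]
      exact (mul_dvd_mul_iff_left hne).mp this
    have hcancel1 : ¬ p ^ (e - 3 + 1) ∣ 7 * x1 ^ 3 + 2 * y1 ^ 3 := by
      intro hcon
      apply he1
      rw [hfac]
      have : p ^ 3 * p ^ (e - 3 + 1) ∣ p ^ 3 * (7 * x1 ^ 3 + 2 * y1 ^ 3) :=
        mul_dvd_mul_left _ hcon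
      rw [← pow_add, show 3 + (e - 3 + 1) = e + 1 by omega] at this
      exact this
    have := ih (e - 3) (by omega) x1 y1 hcancel hcancel1
    omega

theorem multiplicity_divisible_by_three (p : Eisenstein) (hp : Prime p)
    (h14 : ¬ p ∣ 14) (h28 : ¬ ∃ t : Eisenstein, p ∣ t ^ 3 - 28) :
    ∀ x y : ℤ, 7 * x ^ 3 + 2 * y ^ 3 ≠ 0 →
      ∀ e : ℕ,
        p ^ e ∣ ((7 * x ^ 3 + 2 * y ^ 3 : ℤ) : Eisenstein) →
        ¬ p ^ (e + 1) ∣ ((7 * x ^ 3 + 2 * y ^ 3 : ℤ) : Eisenstein) →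
        3 ∣ e := by
  intro x y _ e he he1
  have hcast : ((7 * x ^ 3 + 2 * y ^ 3 : ℤ) : Eisenstein)
      = 7 * (x : Eisenstein) ^ 3 + 2 * (y : Eisenstein) ^ 3 := by push_cast; ring
  rw [hcast] at he he1
  exact key_lemma p hp h14 h28 e _ _ he he1
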